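/- arXiv:2006.02414 — 5 statements merged into one kernel-verified Lean document; each statement's English description precedes it below -/
import Mathlib

section
/- Any two nonabelian free groups (of possibly different ranks, each at least 2, possibly infinite) satisfy the same universal sentences in the language of groups. -/
open FirstOrder Language

/-- Function symbols of the first-order language of groups:
binary multiplication, unary inverse, and a constant for the identity. -/
inductive GroupFunc : ℕ → Type
  | mul : GroupFunc 2
  | inv : GroupFunc 1
  | one : GroupFunc 0

/-- The first-order language of groups. -/
def Lgroup : FirstOrder.Language := ⟨GroupFunc, fun _ => Empty⟩

/-- Every group is a structure in the language of groups. -/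
noncomputable instance (G : Type*) [Group G] : Lgroup.Structure G where
  funMap := fun f v =>
    match f with
    | .mul => v 0 * v 1
    | .inv => (v 0)⁻¹
    | .one => 1
  RelMap := fun r => r.elim

/-- A universal sentence is one of the form `∀ x₁ ... ∀ xₙ, φ` with `φ` quantifier-free. -/
def IsUniversalSentence (σ : Lgroup.Sentence) : Prop :=
  ∃ (n : ℕ) (φ : Lgroup.BoundedFormula Empty n), φ.IsQF ∧ σ = φ.alls

noncomputable section PingPong

private def Pp : Equiv.Perm (ℤ × ℤ) := Equiv.prodCongr (Equiv.addRight 1) (Equiv.refl ℤ)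

private lemma Pp_zpow (i : ℤ) : ∀ p : ℤ × ℤ, (Pp ^ i) p = (p.1 + i, p.2) := by
  induction i using Int.induction_on with
  | zero => intro p; simp
  | succ n ih =>
      intro p
      rw [zpow_add_one, Equiv.Perm.mul_apply, ih]
      have : Pp p = (p.1 + 1, p.2) := rfl
      rw [this]
      simp; ring
  | pred n ih =>
      intro p
      rw [zpow_sub_one, Equiv.Perm.mul_apply]
      have : Pp⁻¹ p = (p.1 - 1, p.2) := rfl
      rw [this, ih]
      simp
      ring

private def Apos : Set (ℤ × ℤ) := {p | p.1 = 0 ∧ 0 < p.2}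
private def Bneg : Set (ℤ × ℤ) := {p | p.1 = 0 ∧ p.2 < 0}

private lemma Apos_inf : Apos.Infinite :=
  Set.infinite_of_injective_forall_mem (f := fun n : ℕ => ((0 : ℤ), (n : ℤ) + 1))
    (fun a b h => by simpa using h) (fun n => ⟨rfl, by positivity⟩)

private lemma Bneg_inf : Bneg.Infinite :=
  Set.infinite_of_injective_forall_mem (f := fun n : ℕ => ((0 : ℤ), -((n : ℤ) + 1)))
    (fun a b h => by simpa using h) (fun n => ⟨rfl, by
      show -((n:ℤ)+1) < 0
      have : (0:ℤ) < (n:ℤ)+1 := by positivity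
      omega⟩)

private lemma Aposc_inf : (Aposᶜ : Set (ℤ × ℤ)).Infinite :=
  Set.infinite_of_injective_forall_mem (f := fun n : ℕ => ((1 : ℤ), (n : ℤ)))
    (fun a b h => by simpa using h) (fun n => by simp [Apos])

private lemma Bnegc_inf : (Bnegᶜ : Set (ℤ × ℤ)).Infinite :=
  Set.infinite_of_injective_forall_mem (f := fun n : ℕ => ((1 : ℤ), (n : ℤ)))
    (fun a b h => by simpa using h) (fun n => by simp [Bneg])

private def Qq : Equiv.Perm (ℤ × ℤ) := by
  classical
  haveI := Bneg_inf.to_subtype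
  haveI := Aposc_inf.to_subtype
  haveI := Bnegc_inf.to_subtype
  haveI := Apos_inf.to_subtype
  have e₁ : ↥Bneg ≃ ↥(Aposᶜ) := Classical.choice (nonempty_equiv_of_countable)
  have e₂ : ↥(Bnegᶜ) ≃ ↥Apos := Classical.choice (nonempty_equiv_of_countable)
  exact (Equiv.Set.sumCompl Bneg).symm.trans ((e₁.sumCongr e₂).trans
    ((Equiv.sumComm _ _).trans (Equiv.Set.sumCompl Apos)))

private lemma Qq_mem {p : ℤ × ℤ} (hp : p ∉ Bneg) : Qq p ∈ Apos := by
  classical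
  unfold Qq
  simp only [Equiv.trans_apply]
  rw [Equiv.Set.sumCompl_symm_apply_of_notMem hp]
  simp only [Equiv.sumCongr_apply, Sum.map_inr, Equiv.sumComm_apply, Sum.swap_inr,
    Equiv.Set.sumCompl_apply_inl]
  exact Subtype.mem _

private lemma Qq_inv_mem {p : ℤ × ℤ} (hp : p ∉ Apos) : Qq⁻¹ p ∈ Bneg := by
  by_contra h
  exact hp (by simpa using Qq_mem h)


private def aP : ℤ → Equiv.Perm (ℤ × ℤ) := fun i => Pp ^ i * Qq * Pp ^ (-i)

private def Xs : ℤ → Set (ℤ × ℤ) := fun i => {p | p.1 = i ∧ 0 < p.2}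
private def Ys : ℤ → Set (ℤ × ℤ) := fun i => {p | p.1 = i ∧ p.2 < 0}

private lemma lift_aP_inj : Function.Injective (FreeGroup.lift aP) := by
  apply FreeGroup.injective_lift_of_ping_pong aP Xs Ys
  · exact fun i => ⟨(i, 1), rfl, one_pos⟩
  · intro i j hij
    show Disjoint (Xs i) (Xs j)
    rw [Set.disjoint_left]
    rintro p ⟨hp1, -⟩ ⟨hq1, -⟩
    exact hij (hp1 ▸ hq1 ▸ rfl)
  · intro i j hij
    show Disjoint (Ys i) (Ys j)
    rw [Set.disjoint_left]
    rintro p ⟨hp1, -⟩ ⟨hq1, -⟩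
    exact hij (hp1 ▸ hq1 ▸ rfl)
  · intro i j
    rw [Set.disjoint_left]
    rintro p ⟨-, hp2⟩ ⟨-, hq2⟩
    exact absurd (hp2.trans hq2) (lt_irrefl _)
  · intro i p hp
    simp only [Set.mem_smul_set] at hp
    obtain ⟨q, hq, rfl⟩ := hp
    have hq' : (Pp ^ (-i)) q ∉ Bneg := by
      rw [Pp_zpow]
      rintro ⟨h1, h2⟩
      exact hq ⟨by omega, h2⟩
    have hmem := Qq_mem hq'
    show (aP i) q ∈ Xs i
    have : (aP i) q = (Pp ^ i) (Qq ((Pp ^ (-i)) q)) := rfl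
    rw [this, Pp_zpow]
    obtain ⟨h1, h2⟩ := hmem
    exact ⟨by omega, h2⟩
  · intro i p hp
    simp only [Set.mem_smul_set] at hp
    obtain ⟨q, hq, rfl⟩ := hp
    have hq' : (Pp ^ (-i)) q ∉ Apos := by
      rw [Pp_zpow]
      rintro ⟨h1, h2⟩
      exact hq ⟨by omega, h2⟩
    have hmem := Qq_inv_mem hq'
    show (aP⁻¹ i) q ∈ Ys i
    have : (aP⁻¹ i) q = (Pp ^ i) (Qq⁻¹ ((Pp ^ (-i)) q)) := by
      show ((aP i)⁻¹) q = _
      simp only [aP, mul_inv_rev, ← zpow_neg, neg_neg, Equiv.Perm.mul_apply]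
    rw [this, Pp_zpow]
    obtain ⟨h1, h2⟩ := hmem
    exact ⟨by omega, h2⟩

variable {T : Type*}

private def bT (t₁ t₂ : T) : ℤ → FreeGroup T := fun i =>
  (FreeGroup.of t₁) ^ i * FreeGroup.of t₂ * (FreeGroup.of t₁) ^ (-i)

private lemma lift_bT_inj {t₁ t₂ : T} (ht : t₁ ≠ t₂) :
    Function.Injective (FreeGroup.lift (bT t₁ t₂)) := by
  classical
  set f : FreeGroup T →* Equiv.Perm (ℤ × ℤ) :=
    FreeGroup.lift (fun t => if t = t₁ then Pp else if t = t₂ then Qq else 1) with hf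
  have hcomp : f.comp (FreeGroup.lift (bT t₁ t₂)) = FreeGroup.lift aP := by
    apply FreeGroup.ext_hom
    intro i
    simp only [MonoidHom.comp_apply, FreeGroup.lift_apply_of, bT, aP, map_mul, map_zpow, hf,
      if_pos rfl, if_neg (Ne.symm ht), if_pos rfl]
    simp [ht]
  intro x y h
  apply lift_aP_inj
  rw [← hcomp]
  simp [MonoidHom.comp_apply, h]

end PingPong

section Letters

variable {S : Type*}

private lemma freeGroup_map_inj {β γ : Type*} [Nonempty β] {f : β → γ}
    (hf : Function.Injective f) : Function.Injective (FreeGroup.map f) := by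
  obtain ⟨g, hg⟩ := hf.hasLeftInverse
  have key : ∀ z : FreeGroup β, FreeGroup.map g (FreeGroup.map f z) = z := by
    intro z
    rw [FreeGroup.map.comp]
    have : g ∘ f = id := funext fun b => hg b
    rw [this, FreeGroup.map.id]
  intro x y h
  rw [← key x, ← key y, h]

private lemma range_mono {L M : List S} (h : ∀ s, s ∈ L → s ∈ M) :
    ((FreeGroup.map (Subtype.val : {s // s ∈ L} → S)).range : Subgroup (FreeGroup S)) ≤
      (FreeGroup.map (Subtype.val : {s // s ∈ M} → S)).range := by
  rintro x ⟨y, rfl⟩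
  refine ⟨FreeGroup.map (fun p : {s // s ∈ L} => (⟨p.1, h p.1 p.2⟩ : {s // s ∈ M})) y, ?_⟩
  rw [FreeGroup.map.comp]
  rfl

private lemma exists_support (x : FreeGroup S) :
    ∃ L : List S, x ∈ (FreeGroup.map (Subtype.val : {s // s ∈ L} → S)).range := by
  refine FreeGroup.induction_on x ⟨[], one_mem _⟩ (fun s => ?_) (fun s hs => ?_) ?_
  · exact ⟨[s], FreeGroup.of (⟨s, List.mem_singleton_self s⟩ : {t // t ∈ [s]}), rfl⟩
  · obtain ⟨L, hL⟩ := hs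
    exact ⟨L, inv_mem hL⟩
  · rintro y z ⟨L, hL⟩ ⟨M, hM⟩
    refine ⟨L ++ M, mul_mem ?_ ?_⟩
    · exact range_mono (fun s hs => List.mem_append_left _ hs) hL
    · exact range_mono (fun s hs => List.mem_append_right _ hs) hM

private lemma exists_support_tuple {n : ℕ} (xs : Fin n → FreeGroup S) :
    ∃ L : List S, ∀ i, xs i ∈ (FreeGroup.map (Subtype.val : {s // s ∈ L} → S)).range := by
  choose Ls hLs using fun i => exists_support (xs i)
  refine ⟨(List.finRange n).flatMap Ls, fun i => ?_⟩
  refine range_mono (fun s hs => ?_) (hLs i)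
  exact List.mem_flatMap.2 ⟨i, List.mem_finRange i, hs⟩

end Letters

section Transfer

private noncomputable def grpEmb {G H : Type*} [Group G] [Group H] (f : G →* H)
    (hf : Function.Injective f) : Lgroup.Embedding G H where
  toFun := f
  inj' := hf
  map_fun' := fun {n} fn v => by
    cases fn
    · exact map_mul f (v 0) (v 1)
    · exact map_inv f (v 0)
    · exact map_one f
  map_rel' := fun {n} r _ => r.elim

private lemma qf_transfer {G H : Type*} [Group G] [Group H] (f : G →* H)
    (hf : Function.Injective f) {n : ℕ} {φ : Lgroup.BoundedFormula Empty n} (hQF : φ.IsQF)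
    {v : Empty → G} {w : Empty → H} {xs : Fin n → G} :
    φ.Realize w (f ∘ xs) ↔ φ.Realize v xs := by
  have hmain := hQF.realize_embedding (grpEmb f hf) (v := v) (xs := xs)
  have hw : w = (grpEmb f hf) ∘ v := funext fun e => e.elim
  rw [hw]
  exact hmain

private lemma universal_transfer {S T : Type*} (hS : ∃ a b : S, a ≠ b) (hT : ∃ a b : T, a ≠ b)
    {σ : Lgroup.Sentence} (hσ : IsUniversalSentence σ) (h : FreeGroup T ⊨ σ) :
    FreeGroup S ⊨ σ := by
  obtain ⟨n, φ, hQF, rfl⟩ := hσ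
  obtain ⟨s₀, -, -⟩ := hS
  obtain ⟨t₁, t₂, ht⟩ := hT
  rw [Sentence.Realize, BoundedFormula.realize_alls] at h ⊢
  intro xs
  obtain ⟨L, hL⟩ := exists_support_tuple xs
  set L' : List S := s₀ :: L with hL'
  have hL2 : ∀ i, xs i ∈ (FreeGroup.map (Subtype.val : {s // s ∈ L'} → S)).range :=
    fun i => range_mono (fun s hs => List.mem_cons_of_mem _ hs) (hL i)
  choose ys hys using fun i => MonoidHom.mem_range.1 (hL2 i)
  haveI : Nonempty {s // s ∈ L'} := ⟨⟨s₀, List.mem_cons_self⟩⟩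
  haveI : Finite {s // s ∈ L'} := (L'.finite_toSet).to_subtype
  obtain ⟨gn, hgn⟩ := exists_injective_nat {s // s ∈ L'}
  have hg : Function.Injective (fun p : {s // s ∈ L'} => (gn p : ℤ)) :=
    fun a b hab => hgn (Int.natCast_inj.mp hab)
  -- embedding into FreeGroup T
  set eT : FreeGroup {s // s ∈ L'} →* FreeGroup T :=
    (FreeGroup.lift (bT t₁ t₂)).comp (FreeGroup.map fun p : {s // s ∈ L'} => (gn p : ℤ)) with heT
  have heTinj : Function.Injective eT := by
    rw [heT, MonoidHom.coe_comp]
    exact Function.Injective.comp (lift_bT_inj ht) (freeGroup_map_inj hg)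
  -- embedding into FreeGroup S
  have heinj : Function.Injective (FreeGroup.map (Subtype.val : {s // s ∈ L'} → S)) :=
    freeGroup_map_inj Subtype.val_injective
  have step1 : φ.Realize (fun e : Empty => e.elim) ys :=
    (qf_transfer eT heTinj hQF (v := fun e => e.elim)).1 (h (eT ∘ ys))
  have hxs : (FreeGroup.map (Subtype.val : {s // s ∈ L'} → S)) ∘ ys = xs := funext hys
  rw [← hxs]
  exact (qf_transfer (FreeGroup.map (Subtype.val : {s // s ∈ L'} → S)) heinj hQF
      (v := fun e => e.elim)).2 step1

end Transfer

/-- Any two nonabelian free groups satisfy the same universal sentences. -/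
theorem universal_theory_eq_of_free_nonabelian {S T : Type*}
    (hS : ∃ a b : S, a ≠ b) (hT : ∃ a b : T, a ≠ b) :
    {σ : Lgroup.Sentence | IsUniversalSentence σ ∧ FreeGroup S ⊨ σ} =
      {σ : Lgroup.Sentence | IsUniversalSentence σ ∧ FreeGroup T ⊨ σ} := by
  ext σ
  simp only [Set.mem_setOf_eq]
  exact ⟨fun ⟨hu, h⟩ => ⟨hu, universal_transfer hT hS hu h⟩,
    fun ⟨hu, h⟩ => ⟨hu, universal_transfer hS hT hu h⟩⟩
end

section
/- Let F be a nonabelian free group and let G be a group satisfying every universal sentence true in F. Then any two elements a, b ∈ G with [a,b] ≠ 1 generate a free subgroup of rank 2. -/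
open FirstOrder Language
open scoped commutatorElement

section GroupTheoryAux

open Function


lemma exists_perm_extend {α : Type*} [Fintype α] [DecidableEq α] (f : α → Option α)
    (hinj : ∀ a b c, f a = some c → f b = some c → a = b) :
    ∃ σ : Equiv.Perm α, ∀ a c, f a = some c → σ a = c := by
  classical
  set p : α → Prop := fun a => (f a).isSome with hp
  let g : {a // p a} → α := fun a => (f a.1).get a.2
  have hg : ∀ (a : {a // p a}), f a.1 = some (g a) := fun a => (Option.some_get a.2).symm
  have ginj : Injective g := by
    intro a b hab
    exact Subtype.ext (hinj a.1 b.1 (g a) (hg a) (by rw [hab]; exact hg b))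
  let e₁ : {a // p a} ≃ Set.range g := Equiv.ofInjective g ginj
  have hcard : Fintype.card {a // ¬ p a} = Fintype.card {x // ¬ x ∈ Set.range g} := by
    rw [Fintype.card_subtype_compl, Fintype.card_subtype_compl]
    congr 1
    exact Fintype.card_congr e₁
  let e₂ : {a // ¬ p a} ≃ {x // ¬ x ∈ Set.range g} := Fintype.equivOfCardEq hcard
  refine ⟨(Equiv.sumCompl p).symm.trans ((e₁.sumCongr e₂).trans
    (Equiv.sumCompl (· ∈ Set.range g))), ?_⟩
  intro a c hac
  have ha : p a := by rw [hp]; simp [hac]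
  have h1 : (Equiv.sumCompl p).symm a = Sum.inl ⟨a, ha⟩ :=
    Equiv.sumCompl_symm_apply_of_pos ha
  simp only [Equiv.trans_apply, h1, Equiv.sumCongr_apply, Sum.map_inl]
  have : g ⟨a, ha⟩ = c := by
    have := hg ⟨a, ha⟩; rw [hac] at this; exact (Option.some_inj.mp this.symm)
  show (Equiv.sumCompl (· ∈ Set.range g)) (Sum.inl (e₁ ⟨a, ha⟩)) = c
  rw [Equiv.sumCompl_apply_inl]
  simpa [e₁] using this

theorem freeGroup_resid_finite {w : FreeGroup Bool} (hw : w ≠ 1) :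
    ∃ (K : Type) (_ : Group K) (_ : Finite K) (ψ : FreeGroup Bool →* K), ψ w ≠ 1 := by
  classical
  set L := w.toWord with hLdef
  have hred : FreeGroup.reduce L = L := FreeGroup.reduce_toWord w
  set n := L.length with hn
  have hn1 : 0 < n := by
    rw [hn, List.length_pos_iff]
    exact fun hnil => hw (FreeGroup.toWord_eq_nil_iff.mp hnil)
  -- no adjacent inverse pairs in L
  have noadjL : ∀ (j : ℕ) (c : Bool) (d : Bool),
      L[j]? = some (c, d) → L[j+1]? = some (c, !d) → False := by
    intro j c d h1 h2
    obtain ⟨hj1, hj2⟩ := List.getElem?_eq_some_iff.mp h1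
    obtain ⟨hk1, hk2⟩ := List.getElem?_eq_some_iff.mp h2
    have hdec : L = L.take j ++ (c, d) :: (c, !d) :: L.drop (j+2) := by
      conv_lhs => rw [← List.take_append_drop j L]
      rw [List.drop_eq_getElem_cons hj1, hj2,
        List.drop_eq_getElem_cons (show j + 1 < L.length from hk1), hk2]
    exact FreeGroup.reduce.not (hred.trans hdec)
  set M := L.reverse with hM
  have hMlen : M.length = n := by rw [hM, List.length_reverse, hn]
  have hML : ∀ (i : ℕ), i < n → M[i]? = L[n-1-i]? := by
    intro i hi
    rw [hM, List.getElem?_reverse (by rw [← hn]; exact hi), ← hn]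
  have noadjM : ∀ (i : ℕ) (c d : Bool), M[i]? = some (c, d) → M[i+1]? = some (c, !d) → False := by
    intro i c d h1 h2
    have hi1 : i < n := by
      have := (List.getElem?_eq_some_iff.mp h1).1; omega
    have hi1' : i + 1 < n := by
      have := (List.getElem?_eq_some_iff.mp h2).1; omega
    rw [hML i hi1] at h1
    rw [hML (i+1) hi1'] at h2
    refine noadjL (n-1-(i+1)) c (!d) h2 ?_
    rw [show n-1-(i+1)+1 = n-1-i by omega, h1, Bool.not_not]
  -- construct the permutations
  have key : ∀ b : Bool, ∃ σ : Equiv.Perm (Fin (n+1)), ∀ (k : ℕ) (hk : k < n),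
      (M[k]? = some (b, true) → σ ⟨k, by omega⟩ = ⟨k+1, by omega⟩) ∧
      (M[k]? = some (b, false) → σ ⟨k+1, by omega⟩ = ⟨k, by omega⟩) := by
    intro b
    set f : Fin (n+1) → Option (Fin (n+1)) := fun k =>
      if h1 : M[(k:ℕ)]? = some (b, true) then
        some ⟨(k:ℕ)+1, by
          have := (List.getElem?_eq_some_iff.mp h1).1; omega⟩
      else if h2 : (k:ℕ) ≠ 0 ∧ M[(k:ℕ)-1]? = some (b, false) then
        some ⟨(k:ℕ)-1, by omega⟩
      else none with hf
    have spec : ∀ (x y : Fin (n+1)), f x = some y →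
        (M[(x:ℕ)]? = some (b, true) ∧ (y:ℕ) = (x:ℕ) + 1) ∨
        ((x:ℕ) ≠ 0 ∧ M[(x:ℕ)-1]? = some (b, false) ∧ (y:ℕ) = (x:ℕ) - 1) := by
      intro x y hxy
      rw [hf] at hxy
      dsimp only at hxy
      split_ifs at hxy with h1 h2
      · left
        obtain rfl := Option.some_inj.mp hxy
        exact ⟨h1, rfl⟩
      · right
        obtain rfl := Option.some_inj.mp hxy
        exact ⟨h2.1, h2.2, rfl⟩
    have hinj : ∀ a c d, f a = some d → f c = some d → a = c := by
      intro a c d ha hc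
      rcases spec a d ha with ⟨hup, hv⟩ | ⟨h0, hdn, hv⟩ <;>
        rcases spec c d hc with ⟨hup', hv'⟩ | ⟨h0', hdn', hv'⟩
      · exact Fin.ext (by omega)
      · exfalso
        refine noadjM (a:ℕ) b true hup ?_
        rw [show (a:ℕ)+1 = (c:ℕ)-1 by omega] at *
        exact hdn'
      · exfalso
        refine noadjM (c:ℕ) b true hup' ?_
        rw [show (c:ℕ)+1 = (a:ℕ)-1 by omega] at *
        exact hdn
      · have ha0 : (a:ℕ) ≠ 0 := h0
        exact Fin.ext (by omega)
    obtain ⟨σ, hσ⟩ := exists_perm_extend f hinj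
    refine ⟨σ, fun k hk => ⟨fun hup => ?_, fun hdown => ?_⟩⟩
    · apply hσ
      rw [hf]
      dsimp only
      rw [dif_pos (show M[((⟨k, by omega⟩ : Fin (n+1)):ℕ)]? = some (b, true) from hup)]
    · apply hσ
      rw [hf]
      dsimp only
      have hnot1 : ¬ (M[((⟨k+1, by omega⟩ : Fin (n+1)):ℕ)]? = some (b, true)) := fun hcon =>
        noadjM k b false hdown hcon
      rw [dif_neg hnot1, dif_pos (show (k+1 : ℕ) ≠ 0 ∧ M[(k+1:ℕ)-1]? = some (b, false) from
        ⟨by omega, by simpa using hdown⟩)]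
      exact congrArg some (Fin.ext (by simp))
  choose σ hσ using key
  refine ⟨Equiv.Perm (Fin (n+1)), inferInstance, inferInstance, FreeGroup.lift σ, ?_⟩
  have main : ∀ (k : ℕ) (hk : k ≤ n),
      (((L.drop (n - k)).map (fun x => cond x.2 (σ x.1) (σ x.1)⁻¹)).prod) ⟨0, by omega⟩
        = ⟨k, by omega⟩ := by
    intro k
    induction k with
    | zero =>
      intro _
      have hd : L.drop (n - 0) = [] := List.drop_eq_nil_of_le (by omega)
      rw [hd]
      simp
    | succ k ih =>
      intro hk
      rw [List.drop_eq_getElem_cons (show n - (k+1) < L.length by omega), List.map_cons,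
        List.prod_cons, show n - (k+1) + 1 = n - k by omega, Equiv.Perm.mul_apply, ih (by omega)]
      rcases hLj : (L[n - (k+1)]'(by omega)) with ⟨b, e⟩
      have hMk : M[k]? = some (b, e) := by
        rw [hML k (by omega), show n - 1 - k = n - (k+1) by omega,
          List.getElem?_eq_getElem (by omega), hLj]
      cases e
      · have hs := (hσ b k (by omega)).2 hMk
        show (σ b)⁻¹ ⟨k, _⟩ = ⟨k+1, _⟩
        rw [← hs, Equiv.Perm.inv_def, Equiv.symm_apply_apply]
      · have hs := (hσ b k (by omega)).1 hMk
        show (σ b) ⟨k, _⟩ = ⟨k+1, _⟩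
        exact hs
  intro hψ
  have hw1 : ((L.map (fun x => cond x.2 (σ x.1) (σ x.1)⁻¹)).prod) = 1 := by
    rw [← FreeGroup.lift_mk]
    rw [show FreeGroup.mk L = w from FreeGroup.mk_toWord]
    exact hψ
  have h0 := main n le_rfl
  rw [Nat.sub_self, List.drop_zero, hw1] at h0
  have : (0:ℕ) = n := by
    have := congrArg Fin.val h0
    simpa using this
  omega

theorem freeGroupBool_hopfian (φ : FreeGroup Bool →* FreeGroup Bool)
    (hs : Surjective φ) : Injective φ := by
  rw [injective_iff_map_eq_one]
  intro w hφw
  by_contra hw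
  obtain ⟨K, _, _, ψ, hψ⟩ := freeGroup_resid_finite hw
  have hfin : Finite (FreeGroup Bool →* K) := Finite.of_equiv _ FreeGroup.lift
  have hcomp_inj : Injective (fun ρ : FreeGroup Bool →* K => ρ.comp φ) := by
    intro ρ₁ ρ₂ hr
    apply MonoidHom.ext
    intro g
    obtain ⟨u, rfl⟩ := hs g
    exact DFunLike.congr_fun hr u
  obtain ⟨ρ, hρ⟩ := (Finite.injective_iff_surjective.mp hcomp_inj) ψ
  have : ψ w = ρ (φ w) := by rw [← hρ]; rfl
  rw [this, hφw, map_one] at hψ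
  exact hψ rfl

theorem no_three_generators {X : Type*} (π : FreeGroup Bool →* FreeGroup X)
    (hs : Surjective π) (x1 x2 x3 : X) (h12 : x1 ≠ x2) (h13 : x1 ≠ x3) (h23 : x2 ≠ x3) :
    False := by
  classical
  let Φ : (X → ℚ) → (FreeGroup X →* Multiplicative ℚ) :=
    fun f => FreeGroup.lift (fun x => Multiplicative.ofAdd (f x))
  have Φadd : ∀ f g : X → ℚ, Φ (f + g) = Φ f * Φ g := by
    intro f g
    apply FreeGroup.ext_hom
    intro x
    simp [Φ, FreeGroup.lift_apply_of]
  have Φsmul : ∀ (c : ℚ) (f : X → ℚ), Φ (c • f) =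
      ((AddMonoidHom.mulLeft c).toMultiplicative).comp (Φ f) := by
    intro c f
    apply FreeGroup.ext_hom
    intro x
    simp [Φ, FreeGroup.lift_apply_of]
  let T : (X → ℚ) →ₗ[ℚ] (ℚ × ℚ) :=
    { toFun := fun f => (Multiplicative.toAdd (Φ f (π (FreeGroup.of true))),
        Multiplicative.toAdd (Φ f (π (FreeGroup.of false))))
      map_add' := by
        intro f g
        rw [Φadd]
        simp
      map_smul' := by
        intro c f
        rw [Φsmul]
        simp }
  have Tinj : Injective T := by
    rw [injective_iff_map_eq_zero]
    intro f hf
    have h1 : ∀ u : FreeGroup Bool, Φ f (π u) = 1 := by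
      intro u
      have : (Φ f).comp π = 1 := by
        apply FreeGroup.ext_hom
        intro i
        cases i
        · simpa [T] using congrArg (fun p : ℚ × ℚ => Multiplicative.ofAdd p.2) hf
        · simpa [T] using congrArg (fun p : ℚ × ℚ => Multiplicative.ofAdd p.1) hf
      exact DFunLike.congr_fun this u
    funext x
    have : Φ f (FreeGroup.of x) = 1 := by
      obtain ⟨u, hu⟩ := hs (FreeGroup.of x)
      rw [← hu]; exact h1 u
    simpa [Φ, FreeGroup.lift_apply_of] using congrArg Multiplicative.toAdd this
  let E : (Fin 3 → ℚ) →ₗ[ℚ] (X → ℚ) :=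
    { toFun := fun v x => if x = x1 then v 0 else if x = x2 then v 1 else
        if x = x3 then v 2 else 0
      map_add' := by intro v w; funext x; dsimp; split_ifs <;> simp
      map_smul' := by intro c v; funext x; dsimp; split_ifs <;> simp }
  have Einj : Injective E := by
    rw [injective_iff_map_eq_zero]
    intro v hv
    have e1 := congrFun hv x1
    have e2 := congrFun hv x2
    have e3 := congrFun hv x3
    simp [E, Ne.symm h12, Ne.symm h13, Ne.symm h23] at e1 e2 e3
    funext i
    fin_cases i <;> simpa using by assumption
  have hco : Injective ⇑(T ∘ₗ E) := by rw [LinearMap.coe_comp]; exact Tinj.comp Einj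
  have hrank := LinearMap.finrank_le_finrank_of_injective hco
  rw [Module.finrank_fin_fun] at hrank
  have : Module.finrank ℚ (ℚ × ℚ) = 2 := by simp
  omega

lemma freeGroup_subsingleton_comm {X : Type*} [hX : Subsingleton X] (u v : FreeGroup X) :
    Commute u v := by
  rcases isEmpty_or_nonempty X with hE | ⟨⟨x0⟩⟩
  · have hone : ∀ z : FreeGroup X, z = 1 := by
      intro z
      rw [← FreeGroup.mk_toWord (x := z)]
      cases hz : z.toWord with
      | nil => exact FreeGroup.one_eq_mk.symm
      | cons a tl => exact (hE.false a.1).elim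
    rw [hone u, hone v]
  · have hall : ∀ z : FreeGroup X, z ∈ Subgroup.zpowers (FreeGroup.of x0) := by
      intro z
      have htop := FreeGroup.closure_range_of X
      have hrange : Set.range (FreeGroup.of : X → FreeGroup X) = {FreeGroup.of x0} := by
        ext t
        constructor
        · rintro ⟨s, rfl⟩
          rw [Subsingleton.elim s x0]
          rfl
        · rintro rfl
          exact ⟨x0, rfl⟩
      rw [hrange, ← Subgroup.zpowers_eq_closure] at htop
      rw [htop]
      trivial
    obtain ⟨m, hm⟩ := hall u
    obtain ⟨k, hk⟩ := hall v
    rw [← hm, ← hk]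
    exact (Commute.refl _).zpow_zpow m k

theorem two_noncommuting_free {S : Type*} {x y : FreeGroup S} (hxy : ¬ Commute x y) :
    Injective (FreeGroup.lift (fun i : Bool => if i then x else y) :
      FreeGroup Bool →* FreeGroup S) := by
  classical
  set g : Bool → FreeGroup S := fun i => if i then x else y with hg
  set φ : FreeGroup Bool →* FreeGroup S := FreeGroup.lift g with hφ
  set H := φ.range with hH
  set X := IsFreeGroup.Generators H with hX
  set iso : H ≃* FreeGroup X := IsFreeGroup.toFreeGroup H with hiso
  set π : FreeGroup Bool →* FreeGroup X := iso.toMonoidHom.comp φ.rangeRestrict with hπ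
  have hπs : Surjective π := iso.surjective.comp φ.rangeRestrict_surjective
  have hπinj : Injective π := by
    by_cases h3 : ∃ u1 u2 u3 : X, u1 ≠ u2 ∧ u1 ≠ u3 ∧ u2 ≠ u3
    · obtain ⟨u1, u2, u3, h12, h13, h23⟩ := h3
      exact (no_three_generators π hπs u1 u2 u3 h12 h13 h23).elim
    · by_cases h2 : ∃ u v : X, u ≠ v
      · obtain ⟨u, v, huv⟩ := h2
        have hall : ∀ z : X, z = u ∨ z = v := by
          intro z
          by_contra hz
          push_neg at hz
          exact h3 ⟨u, v, z, huv, Ne.symm hz.1, Ne.symm hz.2⟩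
        let e : X ≃ Bool :=
          { toFun := fun z => if z = u then true else false
            invFun := fun b => if b then u else v
            left_inv := by
              intro z
              rcases hall z with rfl | rfl
              · simp
              · simp [Ne.symm huv]
            right_inv := by
              intro b
              cases b
              · simp [Ne.symm huv]
              · simp }
        have hhopf := freeGroupBool_hopfian ((FreeGroup.freeGroupCongr e).toMonoidHom.comp π)
          ((FreeGroup.freeGroupCongr e).surjective.comp hπs)
        intro a b hab
        exact hhopf (by simp [MonoidHom.comp_apply, hab])
      · have hsub : Subsingleton X := ⟨fun a b => by
          by_contra hne
          exact h2 ⟨a, b, hne⟩⟩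
        exfalso
        apply hxy
        have hcH : Commute (φ.rangeRestrict (FreeGroup.of true))
            (φ.rangeRestrict (FreeGroup.of false)) := by
          apply iso.injective
          rw [map_mul, map_mul]
          exact @freeGroup_subsingleton_comm X hsub _ _
        have hc2 := congrArg (H.subtype) hcH
        rw [map_mul, map_mul] at hc2
        simp only [Subgroup.coe_subtype, MonoidHom.coe_rangeRestrict] at hc2
        have hx : φ (FreeGroup.of true) = x := by rw [hφ, FreeGroup.lift_apply_of]; simp [hg]
        have hy : φ (FreeGroup.of false) = y := by rw [hφ, FreeGroup.lift_apply_of]; simp [hg]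
        rw [hx, hy] at hc2
        exact hc2
  intro a b hab
  apply hπinj
  show iso (φ.rangeRestrict a) = iso (φ.rangeRestrict b)
  congr 1
  exact Subtype.ext (by rw [MonoidHom.coe_rangeRestrict, MonoidHom.coe_rangeRestrict]; exact hab)

namespace AuxFO

abbrev T2 := Lgroup.Term (Empty ⊕ Fin 2)

def oneT : T2 := Term.func (GroupFunc.one : Lgroup.Functions 0) ![]
def mulT (t1 t2 : T2) : T2 := Term.func (GroupFunc.mul : Lgroup.Functions 2) ![t1, t2]
def invT (t : T2) : T2 := Term.func (GroupFunc.inv : Lgroup.Functions 1) ![t]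
def varT (b : Bool) : T2 := Term.var (Sum.inr (if b then 0 else 1))

def wordT (L : List (Bool × Bool)) : T2 :=
  L.foldr (fun p t => mulT (cond p.2 (varT p.1) (invT (varT p.1))) t) oneT

variable {G : Type*} [Group G]

lemma realize_oneT (env : Empty ⊕ Fin 2 → G) : oneT.realize env = 1 := rfl

lemma realize_mulT (env : Empty ⊕ Fin 2 → G) (t1 t2 : T2) :
    (mulT t1 t2).realize env = t1.realize env * t2.realize env := rfl

lemma realize_invT (env : Empty ⊕ Fin 2 → G) (t : T2) :
    (invT t).realize env = (t.realize env)⁻¹ := rfl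

lemma realize_varT (env : Empty ⊕ Fin 2 → G) (b : Bool) :
    (varT b).realize env = env (Sum.inr (if b then 0 else 1)) := rfl

lemma realize_wordT (env : Empty ⊕ Fin 2 → G) (L : List (Bool × Bool)) :
    (wordT L).realize env =
      (L.map fun p => cond p.2 (env (Sum.inr (if p.1 then 0 else 1)))
        (env (Sum.inr (if p.1 then 0 else 1)))⁻¹).prod := by
  induction L with
  | nil => simp [wordT, realize_oneT]
  | cons p tl ih =>
    rw [wordT, List.foldr_cons, List.map_cons, List.prod_cons]
    rw [show (List.foldr _ oneT tl : T2) = wordT tl from rfl] at *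
    rw [realize_mulT, ih]
    congr 1
    cases hp : p.2
    · rw [cond_false, cond_false, realize_invT, realize_varT]
    · rw [cond_true, cond_true, realize_varT]

lemma realize_wordT_lift (ve : Empty → G) (a b : G) (w : FreeGroup Bool) :
    (wordT w.toWord).realize (Sum.elim ve ![a, b]) =
      FreeGroup.lift (fun i : Bool => if i then a else b) w := by
  conv_rhs => rw [← FreeGroup.mk_toWord (x := w)]
  rw [FreeGroup.lift_mk, realize_wordT]
  congr 1
  apply List.map_congr_left
  intro p _
  cases hp : p.1 <;> simp

def commW : List (Bool × Bool) := [(true, true), (false, true), (true, false), (false, false)]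

lemma realize_commW (ve : Empty → G) (a b : G) :
    (wordT commW).realize (Sum.elim ve ![a, b]) = ⁅a, b⁆ := by
  rw [realize_wordT]
  simp [commW, commutatorElement_def, mul_assoc]

/-- The universal sentence `∀ x y, w(x,y) = 1 → [x,y] = 1`. -/
def sentenceOf (w : FreeGroup Bool) : Lgroup.Sentence :=
  (((wordT w.toWord).bdEqual oneT).imp ((wordT commW).bdEqual oneT)).alls

lemma isUniversal_sentenceOf (w : FreeGroup Bool) : IsUniversalSentence (sentenceOf w) :=
  ⟨2, _, (BoundedFormula.IsAtomic.equal _ _).isQF.imp (BoundedFormula.IsAtomic.equal _ _).isQF,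
    rfl⟩

lemma realize_sentenceOf (w : FreeGroup Bool) :
    G ⊨ sentenceOf w ↔ ∀ a b : G,
      FreeGroup.lift (fun i : Bool => if i then a else b) w = 1 → ⁅a, b⁆ = 1 := by
  rw [sentenceOf, Sentence.Realize, BoundedFormula.realize_alls]
  constructor
  · intro H a b hw
    have := H ![a, b]
    rw [BoundedFormula.realize_imp, BoundedFormula.realize_bdEqual,
      BoundedFormula.realize_bdEqual] at this
    rw [realize_wordT_lift, realize_commW] at this
    exact this (by rw [realize_oneT]; exact hw) |>.trans (realize_oneT _)
    
  · intro H xs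
    rw [BoundedFormula.realize_imp, BoundedFormula.realize_bdEqual,
      BoundedFormula.realize_bdEqual]
    have hxs : xs = ![xs 0, xs 1] := by
      funext i
      fin_cases i <;> rfl
    rw [hxs, realize_wordT_lift, realize_commW]
    intro h1
    rw [realize_oneT]
    rw [realize_oneT] at h1
    exact H (xs 0) (xs 1) h1

end AuxFO


end GroupTheoryAux

/-- In a group satisfying the universal theory of a nonabelian free group,
any two non-commuting elements generate a free subgroup of rank 2. -/
theorem free_rank_two_of_noncommuting {S : Type*} (hS : ∃ a b : S, a ≠ b)
    {G : Type*} [Group G]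
    (h : ∀ σ : Lgroup.Sentence, IsUniversalSentence σ → FreeGroup S ⊨ σ → G ⊨ σ)
    (a b : G) (hab : ⁅a, b⁆ ≠ 1) :
    Function.Injective
      (FreeGroup.lift (fun i : Bool => if i then a else b) : FreeGroup Bool →* G) := by
  rw [injective_iff_map_eq_one]
  intro w hw1
  by_contra hw
  have huniv := AuxFO.isUniversal_sentenceOf w
  have hfree : FreeGroup S ⊨ AuxFO.sentenceOf w := by
    rw [AuxFO.realize_sentenceOf]
    intro x y hlift
    rw [commutatorElement_eq_one_iff_commute]
    by_contra hc
    exact hw ((injective_iff_map_eq_one _).mp (two_noncommuting_free hc) w hlift)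
  have hG := h _ huniv hfree
  rw [AuxFO.realize_sentenceOf] at hG
  exact hab (hG a b hw1)
end

section
/- Every group elementarily equivalent to a nonabelian free group is CSA in the following sense: for all elements x, y, if x ≠ 1 and x commutes with y⁻¹xy, then x commutes with y. -/
open FirstOrder Language
open scoped commutatorElement

universe u


-- distinct generators don't commute
lemma freeGroup_not_commute {X : Type u} {a b : X} (hab : a ≠ b) :
    ¬ Commute (FreeGroup.of a) (FreeGroup.of b) := by
  have hnc : ¬ Commute (Equiv.swap (0:Fin 3) 1) (Equiv.swap 1 2) := by unfold Commute SemiconjBy; decide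
  classical
  intro hc
  let c₁ : Equiv.Perm (Fin 3) := Equiv.swap 0 1
  let c₂ : Equiv.Perm (Fin 3) := Equiv.swap 1 2
  let f : FreeGroup X →* Equiv.Perm (Fin 3) :=
    FreeGroup.lift (fun x => if x = a then c₁ else if x = b then c₂ else 1)
  have h2 := hc.map f
  simp only [f, FreeGroup.lift_apply_of, eq_self_iff_true, if_neg hab, if_neg (Ne.symm hab)] at h2
  rw [if_true, if_true] at h2
  exact hnc h2

lemma freeGroup_subsingleton_zpow {X : Type u} [Subsingleton X] (x₀ : X) (g : FreeGroup X) :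
    ∃ n : ℤ, g = FreeGroup.of x₀ ^ n := by
  induction g with
  | C1 => exact ⟨0, by simp⟩
  | of x => exact ⟨1, by rw [Subsingleton.elim x x₀]; simp⟩
  | inv_of x ih => obtain ⟨n, hn⟩ := ih; exact ⟨-n, by rw [hn]; simp⟩
  | mul x y ihx ihy =>
      obtain ⟨n, hn⟩ := ihx; obtain ⟨m, hm⟩ := ihy
      exact ⟨n + m, by rw [hn, hm, zpow_add]⟩

lemma freeGroup_subsingleton_commute {X : Type u} [Subsingleton X] (g h : FreeGroup X) :
    Commute g h := by
  rcases isEmpty_or_nonempty X with hX | ⟨⟨x₀⟩⟩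
  · have triv : ∀ k : FreeGroup X, k = 1 := by
      intro k
      induction k with
      | C1 => rfl
      | of x => exact (hX.false x).elim
      | inv_of x ih => rw [ih]; simp
      | mul a b iha ihb => rw [iha, ihb]; simp
    rw [triv g, triv h]
  · obtain ⟨n, hn⟩ := freeGroup_subsingleton_zpow x₀ g
    obtain ⟨m, hm⟩ := freeGroup_subsingleton_zpow x₀ h
    rw [hn, hm]
    exact (Commute.refl _).zpow_zpow n m

lemma exists_common_zpow {G : Type u} [Group G] [IsFreeGroup G] {u v : G}
    (h : Commute u v) : ∃ (z : G) (m n : ℤ), u = z ^ m ∧ v = z ^ n := by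
  set H : Subgroup G := Subgroup.closure {u, v} with hH
  have hu : u ∈ H := Subgroup.subset_closure (by simp)
  have hv : v ∈ H := Subgroup.subset_closure (by simp)
  have hcom : ∀ w ∈ H, Commute u w ∧ Commute v w := by
    intro w hw
    induction hw using Subgroup.closure_induction with
    | mem w hw =>
        rcases hw with h1 | h1 <;> subst h1
        · exact ⟨Commute.refl _, h.symm⟩
        · exact ⟨h, Commute.refl _⟩
    | one => exact ⟨Commute.one_right u, Commute.one_right v⟩
    | mul a b _ _ iha ihb => exact ⟨iha.1.mul_right ihb.1, iha.2.mul_right ihb.2⟩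
    | inv a _ iha => exact ⟨iha.1.inv_right, iha.2.inv_right⟩
  have habel : ∀ a b : H, Commute a b := by
    rintro ⟨a, ha⟩ ⟨b, hb⟩
    have key : ∀ w ∈ H, Commute w a := by
      intro w hw
      induction hw using Subgroup.closure_induction with
      | mem w hw =>
          rcases hw with h1 | h1 <;> subst h1
          · exact (hcom a ha).1
          · exact (hcom a ha).2
      | one => exact Commute.one_left a
      | mul c d _ _ ihc ihd => exact ihc.mul_left ihd
      | inv c _ ihc => exact ihc.inv_left
    have hab : Commute a b := (key b hb).symm
    exact Subtype.ext (by simpa using hab.eq)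
  set X := IsFreeGroup.Generators H with hX
  set e : H ≃* FreeGroup X := IsFreeGroup.toFreeGroup H with he
  have hsub : Subsingleton X := by
    by_contra hns
    obtain ⟨a, b, hab⟩ := (not_subsingleton_iff_nontrivial.mp hns).exists_pair_ne
    apply freeGroup_not_commute hab
    have h1 := (habel (e.symm (FreeGroup.of a)) (e.symm (FreeGroup.of b))).map e.toMonoidHom
    simpa using h1
  rcases isEmpty_or_nonempty X with hXe | ⟨⟨x₀⟩⟩
  · have triv : ∀ k : FreeGroup X, k = 1 := by
      intro k
      induction k with
      | C1 => rfl
      | of x => exact (hXe.false x).elim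
      | inv_of x ih => rw [ih]; simp
      | mul a b iha ihb => rw [iha, ihb]; simp
    have hu1 : u = 1 := by
      have : (⟨u, hu⟩ : H) = 1 := by
        have h2 : e ⟨u, hu⟩ = 1 := triv _
        have h3 := congrArg e.symm h2
        simpa using h3
      simpa using congrArg (Subtype.val) this
    have hv1 : v = 1 := by
      have : (⟨v, hv⟩ : H) = 1 := by
        have h2 : e ⟨v, hv⟩ = 1 := triv _
        have h3 := congrArg e.symm h2
        simpa using h3
      simpa using congrArg (Subtype.val) this
    exact ⟨1, 0, 0, by simp [hu1], by simp [hv1]⟩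
  · set z₀ : H := e.symm (FreeGroup.of x₀) with hz₀
    obtain ⟨m, hm⟩ := freeGroup_subsingleton_zpow x₀ (e ⟨u, hu⟩)
    obtain ⟨n, hn⟩ := freeGroup_subsingleton_zpow x₀ (e ⟨v, hv⟩)
    refine ⟨(z₀ : G), m, n, ?_, ?_⟩
    · have h3 := congrArg e.symm hm
      simp only [MulEquiv.symm_apply_apply, map_zpow] at h3
      rw [← hz₀] at h3
      have := congrArg (Subtype.val) h3
      simpa using this
    · have h3 := congrArg e.symm hn
      simp only [MulEquiv.symm_apply_apply, map_zpow] at h3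
      rw [← hz₀] at h3
      have := congrArg (Subtype.val) h3
      simpa using this

lemma commute_of_conj_zpow {G : Type u} [Group G] [IsFreeGroup G] {z y : G} {m n : ℤ}
    (h : y⁻¹ * z ^ m * y = z ^ n) : Commute (z ^ m) y := by
  by_cases hmn : m = n
  · subst hmn
    have h1 : z ^ m * y = y * z ^ m := by
      conv_rhs => rw [← h]
      group
    exact h1
  · -- abelianization trick on the subgroup generated by z and y
    set H : Subgroup G := Subgroup.closure {z, y} with hH
    have hz : z ∈ H := Subgroup.subset_closure (by simp)
    have hy : y ∈ H := Subgroup.subset_closure (by simp)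
    set Z : H := ⟨z, hz⟩ with hZ
    set Y : H := ⟨y, hy⟩ with hY
    have hrel : Y⁻¹ * Z ^ m * Y = Z ^ n := Subtype.ext (by push_cast; exact h)
    set X := IsFreeGroup.Generators H with hXdef
    set e : H ≃* FreeGroup X := IsFreeGroup.toFreeGroup H with he
    set φ : FreeGroup X →* Multiplicative (X →₀ ℤ) :=
      FreeGroup.lift (fun x : X => Multiplicative.ofAdd (Finsupp.single x (1 : ℤ))) with hφ
    set ψ : H →* Multiplicative (X →₀ ℤ) := φ.comp e.toMonoidHom with hψ
    have happ : ψ Y⁻¹ * ψ Z ^ m * ψ Y = ψ Z ^ n := by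
      have := congrArg ψ hrel
      simpa [map_mul, map_zpow, map_inv] using this
    have hzz : ψ Z ^ m = ψ Z ^ n := by
      have : ψ Y⁻¹ * ψ Z ^ m * ψ Y = ψ Z ^ m := by
        rw [mul_comm (ψ Y⁻¹) (ψ Z ^ m), mul_assoc]
        simp
      rw [this] at happ; exact happ
    have hψZ : ψ Z = 1 := by
      set t := Multiplicative.toAdd (ψ Z) with ht
      have h2 : (m - n) • t = 0 := by
        have := congrArg Multiplicative.toAdd hzz
        simp only [toAdd_zpow] at this
        rw [sub_smul, this]
        exact sub_self _
      have h3 : t = 0 := by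
        ext x
        have := congrArg (fun f => f x) h2
        simp only [Finsupp.smul_apply, smul_eq_mul, Finsupp.coe_zero, Pi.zero_apply] at this
        rcases mul_eq_zero.mp this with h4 | h4
        · exact absurd h4 (sub_ne_zero.mpr hmn)
        · exact h4
      have := congrArg Multiplicative.ofAdd h3
      exact this
    -- every element of FreeGroup X maps under φ into the cyclic subgroup generated by ψ Y
    have hmemb : ∀ g : FreeGroup X, ∃ k : ℤ, (ψ Y) ^ k = φ g := by
      intro g
      have htop : Subgroup.closure (((↑) : H → G) ⁻¹' {z, y}) = ⊤ :=
        Subgroup.closure_closure_coe_preimage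
      have hpre : (((↑) : H → G) ⁻¹' {z, y}) = {Z, Y} := by
        ext ⟨w, hw⟩
        simp [Set.mem_preimage, hZ, hY, Subtype.ext_iff]
      have hg : e.symm g ∈ Subgroup.closure ({Z, Y} : Set H) := by
        rw [← hpre, htop]; trivial
      have hg2 : ψ (e.symm g) ∈ Subgroup.closure (ψ '' ({Z, Y} : Set H)) := by
        rw [← MonoidHom.map_closure]
        exact Subgroup.mem_map_of_mem ψ hg
      have him : ψ '' ({Z, Y} : Set H) = {1, ψ Y} := by
        rw [Set.image_pair, hψZ]
      rw [him] at hg2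
      have hg3 : ψ (e.symm g) ∈ Subgroup.closure ({ψ Y} : Set (Multiplicative (X →₀ ℤ))) := by
        refine (Subgroup.closure_le _).mpr ?_ hg2
        rintro w (rfl | rfl)
        · exact Subgroup.one_mem _
        · exact Subgroup.subset_closure rfl
      have hg4 : ψ (e.symm g) = φ g := by
        simp [hψ]
      rw [hg4] at hg3
      exact Subgroup.mem_closure_singleton.mp hg3
    have hsub : Subsingleton X := by
      by_contra hns
      obtain ⟨a, b, hab⟩ := (not_subsingleton_iff_nontrivial.mp hns).exists_pair_ne
      obtain ⟨k, hk⟩ := hmemb (FreeGroup.of a)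
      obtain ⟨l, hl⟩ := hmemb (FreeGroup.of b)
      rw [hφ, FreeGroup.lift_apply_of] at hk hl
      set t := Multiplicative.toAdd (ψ Y) with ht
      have hk' : k • t = Finsupp.single a (1 : ℤ) := by
        have := congrArg Multiplicative.toAdd hk
        simpa [toAdd_zpow, ← ht] using this
      have hl' : l • t = Finsupp.single b (1 : ℤ) := by
        have := congrArg Multiplicative.toAdd hl
        simpa [toAdd_zpow, ← ht] using this
      have e1 : k * t a = 1 := by
        have := congrArg (fun f => f a) hk'
        simpa using this
      have e2 : l * t a = 0 := by
        have := congrArg (fun f => f a) hl'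
        simpa [Finsupp.single_apply, Ne.symm hab] using this
      have e3 : l * t b = 1 := by
        have := congrArg (fun f => f b) hl'
        simpa using this
      have hta : t a ≠ 0 := by
        intro h0; rw [h0, mul_zero] at e1; omega
      have hl0 : l = 0 := by
        rcases mul_eq_zero.mp e2 with h0 | h0
        · exact h0
        · exact absurd h0 hta
      rw [hl0, zero_mul] at e3
      omega
    have hZY : Commute Z Y := by
      have h1 := freeGroup_subsingleton_commute (e Z) (e Y)
      have h2 := h1.map e.symm.toMonoidHom
      simpa using h2
    have hzy : Commute z y := congrArg Subtype.val hZY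
    exact hzy.zpow_left m

/-- Free groups are CSA: if `x` commutes with `y⁻¹ * x * y` then `x` commutes with `y`. -/
lemma freeGroup_csa {S : Type u} (x y : FreeGroup S)
    (hc : Commute x (y⁻¹ * x * y)) : Commute x y := by
  obtain ⟨z, m, n, hx, hconj⟩ := exists_common_zpow hc
  have h1 : y⁻¹ * z ^ m * y = z ^ n := by rw [← hx, hconj]
  have h2 : Commute (z ^ m) y := commute_of_conj_zpow h1
  rw [hx]
  exact h2

@[simp] lemma funMap_mul {G : Type*} [Group G] (v : Fin 2 → G) :
    Structure.funMap (L := Lgroup) (M := G) GroupFunc.mul v = v 0 * v 1 := rfl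
@[simp] lemma funMap_inv {G : Type*} [Group G] (v : Fin 1 → G) :
    Structure.funMap (L := Lgroup) (M := G) GroupFunc.inv v = (v 0)⁻¹ := rfl
@[simp] lemma funMap_one {G : Type*} [Group G] (v : Fin 0 → G) :
    Structure.funMap (L := Lgroup) (M := G) GroupFunc.one v = 1 := rfl

/-- term-level multiplication -/
def tmul {α : Type*} (t₁ t₂ : Lgroup.Term α) : Lgroup.Term α :=
  Term.func (GroupFunc.mul : Lgroup.Functions 2) ![t₁, t₂]
def tinv {α : Type*} (t : Lgroup.Term α) : Lgroup.Term α :=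
  Term.func (GroupFunc.inv : Lgroup.Functions 1) ![t]
def tone {α : Type*} : Lgroup.Term α :=
  Term.func (GroupFunc.one : Lgroup.Functions 0) ![]

@[simp] lemma realize_tmul {G : Type*} [Group G] {α} (v : α → G) (t₁ t₂ : Lgroup.Term α) :
    (tmul t₁ t₂).realize v = t₁.realize v * t₂.realize v := by
  simp [tmul, Term.realize]
@[simp] lemma realize_tinv {G : Type*} [Group G] {α} (v : α → G) (t : Lgroup.Term α) :
    (tinv t).realize v = (t.realize v)⁻¹ := by
  simp [tinv, Term.realize]
@[simp] lemma realize_tone {G : Type*} [Group G] {α} (v : α → G) :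
    (tone : Lgroup.Term α).realize v = 1 := by
  simp [tone, Term.realize]

/-- the CSA sentence: ∀ x y, (x ≠ 1 ∧ x·(y⁻¹xy) = (y⁻¹xy)·x) → x·y = y·x -/
def csaSentence : Lgroup.Sentence :=
  letI x : Lgroup.Term (Empty ⊕ Fin 2) := Term.var (Sum.inr 0)
  letI y : Lgroup.Term (Empty ⊕ Fin 2) := Term.var (Sum.inr 1)
  letI w : Lgroup.Term (Empty ⊕ Fin 2) := tmul (tinv y) (tmul x y)
  ((∼(Term.bdEqual x tone) ⊓ Term.bdEqual (tmul x w) (tmul w x)) ⟹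
    Term.bdEqual (tmul x y) (tmul y x)).all.all

lemma realize_csaSentence {G : Type*} [Group G] :
    (G ⊨ csaSentence) ↔
      ∀ x y : G, x ≠ 1 → x * (y⁻¹ * (x * y)) = (y⁻¹ * (x * y)) * x → x * y = y * x := by
  simp only [csaSentence, Sentence.Realize, Formula.Realize, BoundedFormula.realize_all,
    BoundedFormula.realize_imp, BoundedFormula.realize_inf, BoundedFormula.realize_not,
    BoundedFormula.realize_bdEqual, realize_tmul, realize_tinv, realize_tone, Term.realize_var,
    Sum.elim_inr, Fin.snoc, and_imp, ne_eq]
  norm_num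

/-- Every group elementarily equivalent to a nonabelian free group is CSA:
if `x ≠ 1` commutes with `y⁻¹ * x * y`, then `x` commutes with `y`. -/
theorem csa_of_elementarilyEquivalent_free {S : Type*} (hS : ∃ a b : S, a ≠ b)
    {M : Type*} [Group M] (h : M ≅[Lgroup] FreeGroup S) :
    ∀ x y : M, x ≠ 1 → ⁅x, y⁻¹ * x * y⁆ = 1 → ⁅x, y⁆ = 1 := by
  intro x y hx hc
  have hfree : FreeGroup S ⊨ csaSentence := by
    rw [realize_csaSentence]
    intro a b _ hcomm
    have hcom : Commute a (b⁻¹ * a * b) := by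
      show a * (b⁻¹ * a * b) = (b⁻¹ * a * b) * a
      rw [mul_assoc b⁻¹ a b]
      exact hcomm
    exact freeGroup_csa a b hcom
  have hM : M ⊨ csaSentence := (elementarilyEquivalent_iff.mp h csaSentence).mpr hfree
  have hkey := realize_csaSentence.mp hM x y hx
  rw [commutatorElement_eq_one_iff_commute] at hc ⊢
  apply hkey
  have : x * (y⁻¹ * x * y) = (y⁻¹ * x * y) * x := hc
  rw [mul_assoc y⁻¹ x y] at this
  exact this
end

section
/- In a free group, the centralizer of any nontrivial element is infinite cyclic. -/
open FreeGroup

private lemma list_cons_eq_append {α : Type*} (c : α) :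
    ∀ (l : List α), c :: l = l ++ [c] → l = List.replicate l.length c
  | [], _ => rfl
  | d :: t, h => by
    simp only [List.cons_append, List.cons.injEq] at h
    obtain ⟨rfl, h2⟩ := h
    have := list_cons_eq_append c t h2
    simp [List.replicate_succ, ← this]

private lemma reduce_cons_of_ne {α : Type*} [DecidableEq α] {w : List (α × Bool)}
    (hw : reduce w = w) (c : α × Bool)
    (h : ∀ hd ∈ w.head?, ¬(c.1 = hd.1 ∧ c.2 = !hd.2)) :
    reduce (c :: w) = c :: w := by
  rw [reduce.cons, hw]
  cases w with
  | nil => rfl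
  | cons hd tl =>
    have := h hd (by simp)
    simp only [this, if_false]

private lemma mem_zpowers_of_commute_of {α : Type*} [DecidableEq α] (a : α) :
    ∀ (z : FreeGroup α), Commute z (of a) → z ∈ Subgroup.zpowers (of a) := by
  suffices key : ∀ n (z : FreeGroup α), z.norm = n → Commute z (of a) →
      z ∈ Subgroup.zpowers (of a) by
    exact fun z => key z.norm z rfl
  intro n
  induction n using Nat.strong_induction_on with
  | _ n ih =>
  intro z hn hcomm
  subst hn
  cases hw : z.toWord with
  | nil =>
    have hz1 : z = 1 := toWord_eq_nil_iff.mp hw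
    rw [hz1]
    exact Subgroup.one_mem _
  | cons hd tl =>
    by_cases hhd : hd = (a, false)
    · -- cancellation case: of a * z is shorter
      subst hhd
      set z' := of a * z with hz'
      have hz'w : z'.toWord = tl := by
        have hmk : z' = mk ((a, true) :: z.toWord) := by
          rw [hz']
          conv_lhs => rw [← mk_toWord (x := z)]
          rw [show of a = mk [(a, true)] from rfl, mul_mk]
          rfl
        rw [hmk, toWord_mk, hw]
        have hred : reduce ((a, false) :: tl) = (a, false) :: tl := by
          rw [← hw, reduce_toWord]
        rw [reduce.cons, hred]
        simp
      have hlt : z'.norm < z.norm := by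
        simp only [FreeGroup.norm, hz'w, hw, List.length_cons]
        omega
      have hcomm' : Commute z' (of a) := (Commute.refl (of a)).mul_left hcomm
      have hmem := ih z'.norm hlt z' rfl hcomm'
      obtain ⟨k, hk⟩ := hmem
      simp only at hk
      refine ⟨k - 1, ?_⟩
      show of a ^ (k - 1) = z
      have hzz : z = (of a)⁻¹ * z' := by rw [hz']; group
      rw [hzz, ← hk, zpow_sub, zpow_one]
      group
    · -- no cancellation: word is a power of a
      have hred : reduce ((a, true) :: z.toWord) = (a, true) :: z.toWord := by
        apply reduce_cons_of_ne (reduce_toWord z)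
        intro h hh
        rw [hw] at hh
        simp only [List.head?_cons, Option.mem_def, Option.some.injEq] at hh
        subst hh
        rintro ⟨h1, h2⟩
        apply hhd
        ext
        · exact h1.symm
        · simpa using h2.symm
      have haz : (of a * z).toWord = (a, true) :: z.toWord := by
        have hmk : of a * z = mk ((a, true) :: z.toWord) := by
          conv_lhs => rw [← mk_toWord (x := z)]
          rw [show of a = mk [(a, true)] from rfl, mul_mk]
          rfl
        rw [hmk, toWord_mk, hred]
      have hza : (z * of a).toWord = (a, true) :: z.toWord := by
        rw [hcomm.eq, haz]
      have hsub : List.Sublist ((z * of a).toWord) (z.toWord ++ [(a, true)]) := by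
        have hs := toWord_mul_sublist z (of a)
        rwa [toWord_of] at hs
      rw [hza] at hsub
      have hlen : ((a, true) :: z.toWord).length = (z.toWord ++ [(a, true)]).length := by
        simp
      have heq := hsub.eq_of_length hlen
      have hrep := list_cons_eq_append _ _ heq
      refine ⟨(z.toWord.length : ℤ), ?_⟩
      show of a ^ (z.toWord.length : ℤ) = z
      rw [zpow_natCast]
      apply toWord_injective
      rw [toWord_of_pow]
      exact hrep.symm

private lemma eq_one_of_commute_two {α : Type*} {a b : α} (hab : a ≠ b)
    (z : FreeGroup α) (ha : Commute z (of a)) (hb : Commute z (of b)) : z = 1 := by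
  classical
  obtain ⟨m, hm⟩ := mem_zpowers_of_commute_of a z ha
  obtain ⟨k, hk⟩ := mem_zpowers_of_commute_of b z hb
  simp only at hm hk
  -- count of a
  let f : FreeGroup α →* Multiplicative ℤ :=
    FreeGroup.lift fun x => Multiplicative.ofAdd (if x = a then (1 : ℤ) else 0)
  have hfa : f (of a) = Multiplicative.ofAdd (1 : ℤ) := by simp [f]
  have hfb : f (of b) = Multiplicative.ofAdd (0 : ℤ) := by
    have : f (of b) = Multiplicative.ofAdd (if b = a then (1 : ℤ) else 0) :=
      FreeGroup.lift_apply_of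
    rw [this, if_neg (Ne.symm hab)]
  have h1 : f z = Multiplicative.ofAdd (m : ℤ) := by
    rw [← hm, map_zpow, hfa, ← ofAdd_zsmul]
    simp
  have h2 : f z = Multiplicative.ofAdd (0 : ℤ) := by
    rw [← hk, map_zpow, hfb, ← ofAdd_zsmul]
    simp
  have hm0 : m = 0 := by
    have := h1.symm.trans h2
    simpa using this
  rw [← hm, hm0, zpow_zero]

private noncomputable def freeGroupUnitMulEquivInt : FreeGroup Unit ≃* Multiplicative ℤ := by
  refine MonoidHom.toMulEquiv
    (FreeGroup.lift fun _ => Multiplicative.ofAdd (1 : ℤ))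
    (zpowersHom _ (FreeGroup.of ())) ?_ ?_
  · ext x
    simp [zpowersHom]
  · ext
    simp [zpowersHom]

/-- In a free group, the centralizer of any nontrivial element is infinite cyclic. -/
theorem centralizer_infinite_cyclic_of_free {S : Type*} (g : FreeGroup S) (hg : g ≠ 1) :
    Nonempty (Subgroup.centralizer ({g} : Set (FreeGroup S)) ≃* Multiplicative ℤ) := by
  classical
  have hgH : g ∈ Subgroup.centralizer ({g} : Set (FreeGroup S)) := by
    rw [Subgroup.mem_centralizer_iff]
    rintro h rfl
    rfl
  obtain ⟨X, ⟨basis⟩⟩ :=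
    IsFreeGroup.nonempty_basis (G := Subgroup.centralizer ({g} : Set (FreeGroup S)))
  let e := basis.repr
  let z : FreeGroup X := e ⟨g, hgH⟩
  have hz1 : z ≠ 1 := by
    intro h
    apply hg
    have heq : (⟨g, hgH⟩ : Subgroup.centralizer ({g} : Set (FreeGroup S))) = 1 :=
      e.injective (by rw [show e ⟨g, hgH⟩ = z from rfl, h]; exact (_root_.map_one e).symm)
    exact Subtype.ext_iff.mp heq
  have hzc : ∀ w : FreeGroup X, Commute z w := by
    intro w
    have hmem := (e.symm w).2
    rw [Subgroup.mem_centralizer_iff] at hmem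
    have hgw := hmem g rfl
    have hcomm : Commute (⟨g, hgH⟩ : Subgroup.centralizer ({g} : Set (FreeGroup S)))
        (e.symm w) := Subtype.ext (by simpa using hgw)
    have hmap := hcomm.map e.toMonoidHom
    simpa [z] using hmap
  have hsub : Subsingleton X := by
    constructor
    intro a b
    by_contra hab
    exact hz1 (eq_one_of_commute_two hab z (hzc _) (hzc _))
  have hne : Nonempty X := by
    by_contra hX
    rw [not_nonempty_iff] at hX
    apply hz1
    cases hw : z.toWord with
    | nil => exact toWord_eq_nil_iff.mp hw
    | cons hd tl => exact (hX.false hd.1).elim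
  haveI : Unique X := uniqueOfSubsingleton hne.some
  exact ⟨(e.trans (FreeGroup.freeGroupCongr (Equiv.equivPUnit X))).trans
    freeGroupUnitMulEquivInt⟩
end

section
/- Every group elementarily equivalent to a nonabelian free group contains a free subgroup of rank 2; in particular it is nonabelian. -/
open FirstOrder Language

set_option maxHeartbeats 1000000 in
lemma pingA (x y : ℚ) (h0 : ¬(x = 0 ∧ y = 0)) (h : ¬(|x| > |y| ∧ x*y < 0)) :
    |x+3*y| > |y| ∧ 0 ≤ (x+3*y)*y := by
  rw [not_and_or, not_lt] at h
  rcases not_and_or.mp h0 with h0 | h0 <;>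
  rcases (Ne.lt_or_gt h0) with h0 | h0 <;>
  rcases abs_cases x with ⟨e1,s1⟩|⟨e1,s1⟩ <;> rcases abs_cases y with ⟨e2,s2⟩|⟨e2,s2⟩ <;>
    rcases abs_cases (x+3*y) with ⟨e3,s3⟩|⟨e3,s3⟩ <;>
    rw [e2, e3] <;> rw [e1, e2] at h <;>
    constructor <;> rcases h with h | h <;> nlinarith [sq_nonneg x, sq_nonneg y]

set_option maxHeartbeats 1000000 in
lemma pingA' (x y : ℚ) (h0 : ¬(x = 0 ∧ y = 0)) (h : ¬(|x| > |y| ∧ 0 ≤ x*y)) :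
    |x-3*y| > |y| ∧ (x-3*y)*y < 0 := by
  rw [not_and_or, not_lt, not_le] at h
  rcases not_and_or.mp h0 with h0 | h0 <;>
  rcases (Ne.lt_or_gt h0) with h0 | h0 <;>
  rcases abs_cases x with ⟨e1,s1⟩|⟨e1,s1⟩ <;> rcases abs_cases y with ⟨e2,s2⟩|⟨e2,s2⟩ <;>
    rcases abs_cases (x-3*y) with ⟨e3,s3⟩|⟨e3,s3⟩ <;>
    rw [e2, e3] <;> rw [e1, e2] at h <;>
    constructor <;> rcases h with h | h <;> nlinarith [sq_nonneg x, sq_nonneg y]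

lemma pingB (x y : ℚ) (h0 : ¬(x = 0 ∧ y = 0)) (h : ¬(|y| > |x| ∧ x*y < 0)) :
    |3*x+y| > |x| ∧ 0 ≤ x*(3*x+y) := by
  have h2 := pingA y x (by tauto) (by rw [mul_comm] at h; exact h)
  constructor
  · have h3 := h2.1; rwa [add_comm] at h3
  · have h3 := h2.2
    nlinarith [h3]

lemma pingB' (x y : ℚ) (h0 : ¬(x = 0 ∧ y = 0)) (h : ¬(|y| > |x| ∧ 0 ≤ x*y)) :
    |y-3*x| > |x| ∧ x*(y-3*x) < 0 := by
  have h2 := pingA' y x (by tauto) (by rw [mul_comm] at h; exact h)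
  constructor
  · exact h2.1
  · have h3 := h2.2
    nlinarith [h3]

noncomputable section
abbrev SL2Z := Matrix.SpecialLinearGroup (Fin 2) ℤ

def sanovA : SL2Z := ⟨!![1,3;0,1], by simp [Matrix.det_fin_two_of]⟩
def sanovB : SL2Z := ⟨!![1,0;3,1], by simp [Matrix.det_fin_two_of]⟩

def V : Type := {v : Fin 2 → ℚ // v ≠ 0}

def slQ (g : SL2Z) : Matrix (Fin 2) (Fin 2) ℚ :=
  (Matrix.SpecialLinearGroup.map (Int.castRingHom ℚ) g).val

lemma slQ_det (g : SL2Z) : (slQ g).det = 1 := by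
  simpa [slQ] using (Matrix.SpecialLinearGroup.map (Int.castRingHom ℚ) g).prop

lemma slQ_mulVec_ne_zero (g : SL2Z) {v : Fin 2 → ℚ} (hv : v ≠ 0) :
    (slQ g).mulVec v ≠ 0 := by
  intro h
  exact hv (Matrix.eq_zero_of_mulVec_eq_zero (by rw [slQ_det]; norm_num) h)

instance : MulAction SL2Z V where
  smul g v := ⟨(slQ g).mulVec v.val, slQ_mulVec_ne_zero g v.prop⟩
  one_smul v := by
    apply Subtype.ext
    show (slQ 1).mulVec _ = _
    simp [slQ]
  mul_smul g h v := by
    apply Subtype.ext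
    show (slQ (g * h)).mulVec _ = (slQ g).mulVec ((slQ h).mulVec _)
    simp only [slQ, map_mul, Matrix.SpecialLinearGroup.coe_mul, Matrix.mulVec_mulVec]

lemma smul_coe (g : SL2Z) (v : V) : (g • v).val = (slQ g).mulVec v.val := rfl

lemma slQ_mk (A : Matrix (Fin 2) (Fin 2) ℤ) (h : A.det = 1) :
    slQ ⟨A, h⟩ = A.map (Int.cast : ℤ → ℚ) := rfl

lemma sanovA_inv : sanovA⁻¹ = (⟨!![1,-3;0,1], by simp [Matrix.det_fin_two_of]⟩ : SL2Z) := by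
  apply inv_eq_of_mul_eq_one_right
  apply Subtype.ext
  show (sanovA : Matrix (Fin 2) (Fin 2) ℤ) * _ = 1
  simp [sanovA]
  ext i j
  fin_cases i <;> fin_cases j <;> simp [Matrix.mul_apply, Fin.sum_univ_two]

lemma sanovB_inv : sanovB⁻¹ = (⟨!![1,0;-3,1], by simp [Matrix.det_fin_two_of]⟩ : SL2Z) := by
  apply inv_eq_of_mul_eq_one_right
  apply Subtype.ext
  show (sanovB : Matrix (Fin 2) (Fin 2) ℤ) * _ = 1
  simp [sanovB]
  ext i j
  fin_cases i <;> fin_cases j <;> simp [Matrix.mul_apply, Fin.sum_univ_two]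

lemma smul_sanovA (v : V) : (sanovA • v).val = ![v.val 0 + 3 * v.val 1, v.val 1] := by
  rw [smul_coe]
  ext i
  fin_cases i <;>
    simp [slQ_mk, sanovA, Matrix.mulVec, dotProduct, Fin.sum_univ_two]

lemma smul_sanovB (v : V) : (sanovB • v).val = ![v.val 0, 3 * v.val 0 + v.val 1] := by
  rw [smul_coe]
  ext i
  fin_cases i <;>
    simp [slQ_mk, sanovB, Matrix.mulVec, dotProduct, Fin.sum_univ_two]

lemma smul_sanovA_inv (v : V) : (sanovA⁻¹ • v).val = ![v.val 0 - 3 * v.val 1, v.val 1] := by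
  rw [smul_coe, sanovA_inv]
  ext i
  fin_cases i <;>
    simp [slQ_mk, Matrix.mulVec, dotProduct, Fin.sum_univ_two] <;> ring

lemma smul_sanovB_inv (v : V) : (sanovB⁻¹ • v).val = ![v.val 0, v.val 1 - 3 * v.val 0] := by
  rw [smul_coe, sanovB_inv]
  ext i
  fin_cases i <;>
    simp [slQ_mk, Matrix.mulVec, dotProduct, Fin.sum_univ_two] <;> ring

lemma V_ne (v : V) : ¬(v.val 0 = 0 ∧ v.val 1 = 0) := by
  rintro ⟨h0, h1⟩
  apply v.prop
  funext i
  fin_cases i <;> simpa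

def PX : Bool → Set V
  | true => {v | |v.val 0| > |v.val 1| ∧ 0 ≤ v.val 0 * v.val 1}
  | false => {v | |v.val 1| > |v.val 0| ∧ 0 ≤ v.val 0 * v.val 1}

def PY : Bool → Set V
  | true => {v | |v.val 0| > |v.val 1| ∧ v.val 0 * v.val 1 < 0}
  | false => {v | |v.val 1| > |v.val 0| ∧ v.val 0 * v.val 1 < 0}


theorem sanov_injective :
    Function.Injective (FreeGroup.lift (fun b : Bool => if b then sanovA else sanovB)) := by
  apply FreeGroup.injective_lift_of_ping_pong _ PX PY
  · rintro (_|_)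
    · refine ⟨⟨![0,1], ?_⟩, by
        show |(![0,1] : Fin 2 → ℚ) 1| > |(![0,1] : Fin 2 → ℚ) 0| ∧ 0 ≤ (![0,1] : Fin 2 → ℚ) 0 * (![0,1] : Fin 2 → ℚ) 1
        norm_num⟩
      intro h; simpa using congrFun h 1
    · refine ⟨⟨![1,0], ?_⟩, by
        show |(![1,0] : Fin 2 → ℚ) 0| > |(![1,0] : Fin 2 → ℚ) 1| ∧ 0 ≤ (![1,0] : Fin 2 → ℚ) 0 * (![1,0] : Fin 2 → ℚ) 1
        norm_num⟩
      intro h; simpa using congrFun h 0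
  · rintro (_|_) (_|_) hij
    · exact absurd rfl hij
    · rw [Function.onFun, Set.disjoint_left]
      rintro v ⟨h1,_⟩ ⟨h2,_⟩; exact absurd (h1.trans h2) (lt_irrefl _)
    · rw [Function.onFun, Set.disjoint_left]
      rintro v ⟨h1,_⟩ ⟨h2,_⟩; exact absurd (h1.trans h2) (lt_irrefl _)
    · exact absurd rfl hij
  · rintro (_|_) (_|_) hij
    · exact absurd rfl hij
    · rw [Function.onFun, Set.disjoint_left]
      rintro v ⟨h1,_⟩ ⟨h2,_⟩; exact absurd (h1.trans h2) (lt_irrefl _)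
    · rw [Function.onFun, Set.disjoint_left]
      rintro v ⟨h1,_⟩ ⟨h2,_⟩; exact absurd (h1.trans h2) (lt_irrefl _)
    · exact absurd rfl hij
  · rintro (_|_) (_|_) <;> rw [Set.disjoint_left] <;> rintro v ⟨h1, h2⟩ ⟨h3, h4⟩
    · exact absurd h4 (not_lt.mpr h2)
    · exact absurd (h1.trans h3) (lt_irrefl _)
    · exact absurd (h1.trans h3) (lt_irrefl _)
    · exact absurd h4 (not_lt.mpr h2)
  · rintro (_|_)
    · rintro _ ⟨v, hv, rfl⟩
      show |(sanovB • v).val 1| > |(sanovB • v).val 0| ∧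
        0 ≤ (sanovB • v).val 0 * (sanovB • v).val 1
      rw [smul_sanovB]
      simp only [Matrix.cons_val_zero, Matrix.cons_val_one, Matrix.head_cons]
      exact pingB _ _ (V_ne v) hv
    · rintro _ ⟨v, hv, rfl⟩
      show |(sanovA • v).val 0| > |(sanovA • v).val 1| ∧
        0 ≤ (sanovA • v).val 0 * (sanovA • v).val 1
      rw [smul_sanovA]
      simp only [Matrix.cons_val_zero, Matrix.cons_val_one, Matrix.head_cons]
      exact pingA _ _ (V_ne v) hv
  · rintro (_|_)
    · rintro _ ⟨v, hv, rfl⟩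
      show |(sanovB⁻¹ • v).val 1| > |(sanovB⁻¹ • v).val 0| ∧
        (sanovB⁻¹ • v).val 0 * (sanovB⁻¹ • v).val 1 < 0
      rw [smul_sanovB_inv]
      simp only [Matrix.cons_val_zero, Matrix.cons_val_one, Matrix.head_cons]
      exact pingB' _ _ (V_ne v) hv
    · rintro _ ⟨v, hv, rfl⟩
      show |(sanovA⁻¹ • v).val 0| > |(sanovA⁻¹ • v).val 1| ∧
        (sanovA⁻¹ • v).val 0 * (sanovA⁻¹ • v).val 1 < 0
      rw [smul_sanovA_inv]
      simp only [Matrix.cons_val_zero, Matrix.cons_val_one, Matrix.head_cons]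
      exact pingA' _ _ (V_ne v) hv

/-- Residual finiteness of the free group on two generators. -/
theorem exists_finite_quotient (g : FreeGroup Bool) (hg : g ≠ 1) :
    ∃ (Q : Type) (_ : Group Q) (_ : Finite Q) (f : FreeGroup Bool →* Q), f g ≠ 1 := by
  set φ := FreeGroup.lift (fun b : Bool => if b then sanovA else sanovB) with hφ
  have hm : φ g ≠ 1 := fun h => hg (sanov_injective (h.trans (map_one φ).symm))
  -- find an entry where φ g differs from 1
  have : (φ g).val ≠ (1 : SL2Z).val := fun h => hm (Subtype.ext h)
  have hentry : ∃ i j, (φ g).val i j ≠ (1 : SL2Z).val i j := by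
    by_contra hc
    push_neg at hc
    exact this (by ext i j; exact hc i j)
  obtain ⟨i, j, hij⟩ := hentry
  set d : ℤ := (φ g).val i j - (1 : SL2Z).val i j with hd
  have hdne : d ≠ 0 := sub_ne_zero.mpr hij
  set n : ℕ := d.natAbs + 1 with hn
  haveI : NeZero n := ⟨Nat.succ_ne_zero _⟩
  refine ⟨Matrix.SpecialLinearGroup (Fin 2) (ZMod n), inferInstance, inferInstance,
    (Matrix.SpecialLinearGroup.map (Int.castRingHom (ZMod n))).comp φ, ?_⟩
  intro h1
  have hmat : ((φ g).val.map (Int.cast : ℤ → ZMod n)) = (1 : Matrix (Fin 2) (Fin 2) (ZMod n)) := by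
    have := congrArg Subtype.val h1
    exact this
  have : ((φ g).val i j : ZMod n) = ((1 : SL2Z).val i j : ZMod n) := by
    have h2 := congrFun (congrFun hmat i) j
    simp [Matrix.map_apply] at h2
    rw [h2]
    by_cases hijeq : i = j <;> simp [Matrix.one_apply, hijeq]
  have hdz : (d : ZMod n) = 0 := by
    push_cast [hd]
    rw [this]; ring
  rw [ZMod.intCast_zmod_eq_zero_iff_dvd] at hdz
  have hdvd : n ∣ d.natAbs := (Int.natAbs_natCast n) ▸ Int.natAbs_dvd_natAbs.mpr hdz
  have := Nat.le_of_dvd (Int.natAbs_pos.mpr hdne) hdvd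
  omega

/-- Free group on two generators is Hopfian. -/
theorem hopf {e : FreeGroup Bool →* FreeGroup Bool} (he : Function.Surjective e) :
    Function.Injective e := by
  rw [injective_iff_map_eq_one]
  intro k hk
  by_contra hk1
  obtain ⟨Q, _, _, f, hf⟩ := exists_finite_quotient k hk1
  haveI : Finite (FreeGroup Bool →* Q) := by
    apply Finite.of_injective (fun ψ => (fun b => ψ (FreeGroup.of b) : Bool → Q))
    intro ψ1 ψ2 hψ
    ext b
    exact congrFun hψ b
  have hcomp : Function.Injective (fun ψ : FreeGroup Bool →* Q => ψ.comp e) := by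
    intro ψ1 ψ2 hψ
    apply MonoidHom.ext
    intro x
    obtain ⟨y, rfl⟩ := he x
    exact DFunLike.congr_fun hψ y
  obtain ⟨ψ, hψ⟩ := (Finite.injective_iff_surjective.mp hcomp) f
  apply hf
  have : f k = ψ (e k) := by rw [← hψ]; rfl
  rw [this, hk, map_one]

theorem freeGroup_commute_of_subsingleton {ι : Type*} [Subsingleton ι] (u v : FreeGroup ι) :
    u * v = v * u := by
  have key : ∀ (w : FreeGroup ι) (i : ι), Commute (FreeGroup.of i) w := by
    intro w
    induction w using FreeGroup.induction_on with
    | C1 => exact fun i => Commute.one_right _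
    | of j => exact fun i => by rw [Subsingleton.elim i j]
    | inv_of j ih => exact fun i => (ih i).inv_right
    | mul a b iha ihb => exact fun i => (iha i).mul_right (ihb i)
  have main : Commute u v := by
    induction u using FreeGroup.induction_on with
    | C1 => exact Commute.one_left _
    | of i => exact key v i
    | inv_of i ih => exact ih.inv_left
    | mul a b iha ihb => exact iha.mul_left ihb
  exact main.eq

theorem lift_injective_of_ne_comm {S : Type*} {x y : FreeGroup S} (hxy : x * y ≠ y * x) :
    Function.Injective (FreeGroup.lift (fun b : Bool => if b then x else y)) := by
  set φ := FreeGroup.lift (fun b : Bool => if b then x else y) with hφ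
  set H := φ.range with hH
  obtain ⟨ι, ⟨bas⟩⟩ := IsFreeGroup.nonempty_basis (G := H)
  set e : H ≃* FreeGroup ι := bas.repr with he
  have hx : x ∈ H := ⟨FreeGroup.of true, by simp [hφ]⟩
  have hy : y ∈ H := ⟨FreeGroup.of false, by simp [hφ]⟩
  by_cases hsub : Subsingleton ι
  · exfalso
    apply hxy
    have hc := freeGroup_commute_of_subsingleton (e ⟨x, hx⟩) (e ⟨y, hy⟩)
    have h2 : (⟨x,hx⟩ : H) * ⟨y,hy⟩ = ⟨y,hy⟩ * ⟨x,hx⟩ := by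
      apply e.injective; rw [map_mul, map_mul, hc]
    exact congrArg Subtype.val h2
  · haveI : Nontrivial ι := not_subsingleton_iff_nontrivial.mp hsub
    set φ' := φ.rangeRestrict with hφ'
    have hφ's : Function.Surjective φ' := φ.rangeRestrict_surjective
    set ψ0 : FreeGroup Bool →* FreeGroup ι := e.toMonoidHom.comp φ' with hψ0def
    have hψ0 : Function.Surjective ψ0 := e.surjective.comp hφ's
    set ab : FreeGroup ι →* Multiplicative (ι →₀ ℤ) :=
      FreeGroup.lift (fun i => Multiplicative.ofAdd (Finsupp.single i 1)) with habdef
    have hab : Function.Surjective ab := by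
      suffices hkey : ∀ w : ι →₀ ℤ, ∃ g, ab g = Multiplicative.ofAdd w by
        intro z; obtain ⟨g, hg⟩ := hkey (Multiplicative.toAdd z); exact ⟨g, by simpa using hg⟩
      intro w
      induction w using Finsupp.induction with
      | zero => exact ⟨1, by simp⟩
      | single_add a b f _ _ ih =>
        obtain ⟨g, hg⟩ := ih
        refine ⟨FreeGroup.of a ^ b * g, ?_⟩
        rw [map_mul, map_zpow, hg, habdef]
        rw [FreeGroup.lift_apply_of]
        rw [← ofAdd_zsmul, Finsupp.smul_single, smul_eq_mul, mul_one, ← ofAdd_add]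
    set g := ab.comp ψ0 with hgdef
    have hgs : Function.Surjective g := hab.comp hψ0
    set u := Multiplicative.toAdd (g (FreeGroup.of true)) with hu
    set v := Multiplicative.toAdd (g (FreeGroup.of false)) with hv
    have keyAll : ∀ s, Multiplicative.toAdd (g s) ∈ Submodule.span ℤ ({u,v} : Set (ι →₀ ℤ)) := by
      intro s
      have hmem : s ∈ Subgroup.closure (Set.range (FreeGroup.of : Bool → FreeGroup Bool)) := by
        rw [FreeGroup.closure_range_of]; trivial
      induction hmem using Subgroup.closure_induction with
      | mem z hz =>
        obtain ⟨b, rfl⟩ := hz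
        cases b
        · exact Submodule.subset_span (by simp [hu, hv])
        · exact Submodule.subset_span (by simp [hu, hv])
      | one => rw [map_one]; simpa using Submodule.zero_mem _
      | mul a b ha hb iha ihb => rw [map_mul]; simpa using Submodule.add_mem _ iha ihb
      | inv a ha iha => rw [map_inv]; simpa using Submodule.neg_mem _ iha
    have hspan : ∀ w : ι →₀ ℤ, w ∈ Submodule.span ℤ ({u, v} : Set (ι →₀ ℤ)) := by
      intro w
      obtain ⟨r, hr⟩ := hgs (Multiplicative.ofAdd w)
      have key := keyAll r
      rw [hr] at key; simpa using key
    have hrank : (Cardinal.mk ι) ≤ 2 := by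
      have h1 : Module.rank ℤ (ι →₀ ℤ) = Cardinal.mk ι := by
        rw [rank_finsupp_self]; simp
      have h2 : Submodule.span ℤ ({u,v} : Set (ι→₀ℤ)) = ⊤ := by
        rw [eq_top_iff]; intro w _; exact hspan w
      have h3 := rank_span_le (R := ℤ) ({u,v} : Set (ι→₀ℤ))
      rw [h2, rank_top, h1] at h3
      refine h3.trans ?_
      refine (Cardinal.mk_insert_le).trans ?_
      rw [Cardinal.mk_singleton]
      norm_num
    have hfin : Finite ι := by
      rw [← Cardinal.lt_aleph0_iff_finite]
      exact lt_of_le_of_lt hrank (by exact_mod_cast Cardinal.nat_lt_aleph0 2)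
    haveI := hfin
    haveI := Fintype.ofFinite ι
    have hcard : Fintype.card ι = 2 := by
      have hmk : (Cardinal.mk ι) = Fintype.card ι := Cardinal.mk_fintype ι
      rw [hmk] at hrank
      have hle : Fintype.card ι ≤ 2 := by exact_mod_cast hrank
      have hlt : 1 < Fintype.card ι := Fintype.one_lt_card
      omega
    have eqv : ι ≃ Bool := Fintype.equivOfCardEq (by rw [hcard, Fintype.card_bool])
    set ψ : FreeGroup Bool →* FreeGroup Bool := (FreeGroup.freeGroupCongr eqv).toMonoidHom.comp ψ0 with hψdef
    have hψs : Function.Surjective ψ := (FreeGroup.freeGroupCongr eqv).surjective.comp hψ0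
    have hinj := hopf hψs
    intro w1 w2 hw
    apply hinj
    have hres : φ' w1 = φ' w2 := Subtype.ext hw
    simp only [hψdef, MonoidHom.comp_apply, hψ0def]
    rw [hres]

end

namespace LgroupAux

def gmul (s t : Lgroup.Term (Empty ⊕ Fin 2)) : Lgroup.Term (Empty ⊕ Fin 2) :=
  Term.func (GroupFunc.mul : Lgroup.Functions 2) ![s, t]

def ginv (s : Lgroup.Term (Empty ⊕ Fin 2)) : Lgroup.Term (Empty ⊕ Fin 2) :=
  Term.func (GroupFunc.inv : Lgroup.Functions 1) ![s]

def gone : Lgroup.Term (Empty ⊕ Fin 2) :=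
  Term.func (GroupFunc.one : Lgroup.Functions 0) ![]

def gv0 : Lgroup.Term (Empty ⊕ Fin 2) := Term.var (Sum.inr 0)
def gv1 : Lgroup.Term (Empty ⊕ Fin 2) := Term.var (Sum.inr 1)

variable {G : Type*} [Group G] (env : Empty ⊕ Fin 2 → G)

@[simp] lemma realize_gmul (s t : Lgroup.Term (Empty ⊕ Fin 2)) :
    (gmul s t).realize env = s.realize env * t.realize env := rfl

@[simp] lemma realize_ginv (s : Lgroup.Term (Empty ⊕ Fin 2)) :
    (ginv s).realize env = (s.realize env)⁻¹ := rfl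

@[simp] lemma realize_gone : (gone : Lgroup.Term (Empty ⊕ Fin 2)).realize env = 1 := rfl

def wordTerm : List (Bool × Bool) → Lgroup.Term (Empty ⊕ Fin 2)
  | [] => gone
  | (b, s) :: rest =>
      gmul (if s then (if b then gv0 else gv1) else ginv (if b then gv0 else gv1)) (wordTerm rest)

lemma realize_wordTerm (a b : G) (L : List (Bool × Bool)) :
    (wordTerm L).realize (Sum.elim Empty.elim ![a, b]) =
      List.prod (L.map fun x => cond x.2 ((fun i : Bool => if i then a else b) x.1)
        ((fun i : Bool => if i then a else b) x.1)⁻¹) := by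
  induction L with
  | nil => simp [wordTerm]
  | cons p rest ih =>
    obtain ⟨c, s⟩ := p
    cases s <;> cases c <;>
      simp [wordTerm, ih, gv0, gv1]

/-- `∀ x y, w(x,y) = 1 → x * y = y * x`. -/
def freeSentence (L : List (Bool × Bool)) : Lgroup.Sentence :=
  (BoundedFormula.imp (Term.bdEqual (wordTerm L) gone)
      (Term.bdEqual (gmul gv0 gv1) (gmul gv1 gv0))).all.all

/-- `∃ x y, x * y ≠ y * x`. -/
def noncommSentence : Lgroup.Sentence :=
  ((Term.bdEqual (gmul gv0 gv1) (gmul gv1 gv0)).not).ex.ex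

lemma snoc_eq (a b : G) :
    (Fin.snoc (Fin.snoc (default : Fin 0 → G) a) b : Fin 2 → G) = ![a, b] := by
  funext i
  fin_cases i <;> simp [Fin.snoc]

lemma realize_freeSentence (L : List (Bool × Bool)) :
    (G ⊨ freeSentence L) ↔ ∀ a b : G,
      (wordTerm L).realize (Sum.elim Empty.elim ![a, b]) = 1 → a * b = b * a := by
  have hd : (default : Empty → G) = Empty.elim := by funext e; exact e.elim
  simp only [freeSentence, Sentence.Realize, Formula.Realize, BoundedFormula.realize_all,
    BoundedFormula.realize_imp, BoundedFormula.realize_bdEqual]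
  constructor
  · intro h a b
    have := h a b
    rw [snoc_eq] at this
    simpa [hd, gv0, gv1] using this
  · intro h a b
    rw [snoc_eq]
    simpa [hd, gv0, gv1] using h a b

lemma realize_noncommSentence :
    (G ⊨ noncommSentence) ↔ ∃ a b : G, a * b ≠ b * a := by
  have hd : (default : Empty → G) = Empty.elim := by funext e; exact e.elim
  simp only [noncommSentence, Sentence.Realize, Formula.Realize, BoundedFormula.realize_ex,
    BoundedFormula.realize_not, BoundedFormula.realize_bdEqual]
  constructor
  · rintro ⟨a, b, h⟩
    rw [snoc_eq] at h
    exact ⟨a, b, by simpa [hd, gv0, gv1] using h⟩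
  · rintro ⟨a, b, h⟩
    refine ⟨a, b, ?_⟩
    rw [snoc_eq]
    simpa [hd, gv0, gv1] using h

end LgroupAux

/-- Every group elementarily equivalent to a nonabelian free group contains a free
subgroup of rank 2; in particular it is nonabelian. -/

theorem free_subgroup_of_elementarilyEquivalent_free {S : Type*} (hS : ∃ a b : S, a ≠ b)
    {M : Type*} [Group M] (h : M ≅[Lgroup] FreeGroup S) :
    (∃ a b : M, Function.Injective
      (FreeGroup.lift (fun i : Bool => if i then a else b) : FreeGroup Bool →* M)) ∧
    ∃ a b : M, a * b ≠ b * a := by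
  classical
  obtain ⟨a₀, b₀, hab⟩ := hS
  have hfree_noncomm : ∃ x y : FreeGroup S, x * y ≠ y * x := by
    refine ⟨FreeGroup.of a₀, FreeGroup.of b₀, fun hcomm => ?_⟩
    have hc := congrArg (FreeGroup.lift
      (fun s => if s = a₀ then Equiv.swap (0 : Fin 3) 1 else Equiv.swap 1 2)) hcomm
    simp only [map_mul, FreeGroup.lift_apply_of, if_pos rfl, if_neg (Ne.symm hab)] at hc
    have hswap : Equiv.swap (0 : Fin 3) 1 * Equiv.swap 1 2 ≠
        Equiv.swap 1 2 * Equiv.swap (0 : Fin 3) 1 := by decide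
    exact hswap hc
  have hM : ∃ a b : M, a * b ≠ b * a := by
    rw [← LgroupAux.realize_noncommSentence, h.realize_sentence,
      LgroupAux.realize_noncommSentence]
    exact hfree_noncomm
  obtain ⟨a, b, habM⟩ := hM
  refine ⟨⟨a, b, ?_⟩, ⟨a, b, habM⟩⟩
  rw [injective_iff_map_eq_one]
  intro w hw
  by_contra hw1
  have hsat : FreeGroup S ⊨ LgroupAux.freeSentence w.toWord := by
    rw [LgroupAux.realize_freeSentence]
    intro x y hxy1
    by_contra hxy
    have hinj := lift_injective_of_ne_comm hxy
    have hlift : FreeGroup.lift (fun i : Bool => if i then x else y) w = 1 := by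
      conv_lhs => rw [← FreeGroup.mk_toWord (x := w)]
      rw [FreeGroup.lift_mk, ← LgroupAux.realize_wordTerm]
      exact hxy1
    exact hw1 (hinj (by rw [hlift, map_one]))
  have hMsat : M ⊨ LgroupAux.freeSentence w.toWord := (h.realize_sentence _).mpr hsat
  rw [LgroupAux.realize_freeSentence] at hMsat
  apply habM
  apply hMsat a b
  rw [LgroupAux.realize_wordTerm]
  rw [← FreeGroup.lift_mk (f := fun i : Bool => if i then a else b) (L := w.toWord),
    FreeGroup.mk_toWord]
  exact hw
end
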